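/- arXiv:1402.6283 — 3 statements merged into one kernel-verified Lean document; each statement's English description precedes it below -/
import Mathlib

section
/- For a real random variable X with mean 0, variance 1, and finite fourth moment, E[X⁴] = 1 holds if and only if the law of X is the symmetric Bernoulli measure (1/2)δ₋₁ + (1/2)δ₁. -/
open MeasureTheory

lemma integrable_smul_dirac {c : ENNReal} (hc : c ≠ ⊤) (f : ℝ → ℝ) (hf : Measurable f)
    (a : ℝ) : Integrable f (c • Measure.dirac a) := by
  refine ⟨hf.aestronglyMeasurable, ?_⟩
  rw [HasFiniteIntegral, lintegral_smul_measure, lintegral_dirac]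
  exact ENNReal.mul_lt_top hc.lt_top ENNReal.coe_lt_top

theorem fourth_moment_eq_one_iff_bernoulli
    {Ω : Type*} [MeasurableSpace Ω] (P : Measure Ω) [IsProbabilityMeasure P]
    (X : Ω → ℝ) (hX : AEMeasurable X P)
    (hInt1 : Integrable X P) (hmean : ∫ ω, X ω ∂P = 0)
    (hInt2 : Integrable (fun ω => X ω ^ 2) P) (hvar : ∫ ω, X ω ^ 2 ∂P = 1)
    (hInt4 : Integrable (fun ω => X ω ^ 4) P) :
    ∫ ω, X ω ^ 4 ∂P = 1 ↔
      Measure.map X P =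
        (1 / 2 : ENNReal) • Measure.dirac (-1 : ℝ) +
          (1 / 2 : ENNReal) • Measure.dirac (1 : ℝ) := by
  set μ := Measure.map X P with hμdef
  haveI : IsProbabilityMeasure μ := Measure.isProbabilityMeasure_map hX
  constructor
  · intro h4
    -- g = (X^2 - 1)^2 is nonneg, integrable, with zero integral
    have hgeq : (fun ω => (X ω ^ 2 - 1) ^ 2) =
        fun ω => X ω ^ 4 - 2 * X ω ^ 2 + 1 := by
      funext ω; ring
    have hIsub : Integrable (fun ω => X ω ^ 4 - 2 * X ω ^ 2) P :=
      hInt4.sub (hInt2.const_mul 2)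
    have hgInt : Integrable (fun ω => (X ω ^ 2 - 1) ^ 2) P := by
      rw [hgeq]; exact hIsub.add (integrable_const 1)
    have hg0 : ∫ ω, (X ω ^ 2 - 1) ^ 2 ∂P = 0 := by
      rw [hgeq, integral_add hIsub (integrable_const 1),
        integral_sub hInt4 (hInt2.const_mul 2), integral_const_mul]
      simp only [h4, hvar, integral_const, measure_univ, ENNReal.toReal_one, smul_eq_mul,
        mul_one, one_smul]
      norm_num
    have hae : ∀ᵐ ω ∂P, X ω ^ 2 = 1 := by
      filter_upwards [(integral_eq_zero_iff_of_nonneg (fun ω => sq_nonneg _) hgInt).mp hg0]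
        with ω hω
      have h := pow_eq_zero_iff (n := 2) (by norm_num) |>.mp hω
      linarith [sub_eq_zero.mp h]
    have hμae : ∀ᵐ x ∂μ, x ∈ ({-1, 1} : Set ℝ) := by
      rw [hμdef, ae_map_iff (p := fun x => x ∈ ({-1, 1} : Set ℝ)) hX (MeasurableSet.insert (measurableSet_singleton 1) (-1))]
      filter_upwards [hae] with ω hω
      rw [pow_two] at hω
      rcases mul_self_eq_one_iff.mp hω with h | h <;> simp [h]
    have hnull : μ (({-1, 1} : Set ℝ)ᶜ) = 0 := mem_ae_iff.mp hμae
    -- decomposition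
    have hA : ∀ a : ℝ, ∀ s : Set ℝ, μ (s ∩ {a}) = μ {a} * s.indicator 1 a := by
      intro a s
      by_cases ha : a ∈ s
      · rw [Set.inter_eq_right.mpr (Set.singleton_subset_iff.mpr ha)]
        simp [Set.indicator_of_mem ha]
      · have : s ∩ {a} = ∅ := by
          ext x; simp only [Set.mem_inter_iff, Set.mem_singleton_iff, Set.mem_empty_iff_false,
            iff_false, not_and]
          rintro hx rfl; exact ha hx
        simp [this, Set.indicator_of_notMem ha]
    have hdis : Disjoint ({-1} : Set ℝ) {1} := Set.disjoint_singleton.mpr (by norm_num)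
    have hdecomp : μ = μ {-1} • Measure.dirac (-1 : ℝ) + μ {1} • Measure.dirac (1 : ℝ) := by
      ext s hs
      rw [Measure.add_apply, Measure.smul_apply, Measure.smul_apply, smul_eq_mul, smul_eq_mul,
        Measure.dirac_apply' _ hs, Measure.dirac_apply' _ hs]
      have h1 : μ s = μ (s ∩ {-1, 1}) := (measure_inter_conull hnull).symm
      have hsplit : s ∩ ({-1, 1} : Set ℝ) = (s ∩ {-1}) ∪ (s ∩ {1}) := by
        rw [show ({-1, 1} : Set ℝ) = {-1} ∪ {1} from rfl, Set.inter_union_distrib_left]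
      rw [h1, hsplit,
        measure_union ((hdis.mono Set.inter_subset_right Set.inter_subset_right))
          (hs.inter (measurableSet_singleton _)), hA, hA]
    -- sum of atoms is 1
    have hsum : μ {-1} + μ {1} = 1 := by
      have hc := measure_add_measure_compl (μ := μ) (s := ({-1, 1} : Set ℝ)) (by measurability)
      rw [hnull, add_zero, measure_univ] at hc
      rw [← hc, show ({-1, 1} : Set ℝ) = {-1} ∪ {1} from rfl,
        measure_union hdis (measurableSet_singleton _)]
    have hne1 : μ {(-1 : ℝ)} ≠ ⊤ := (measure_lt_top μ _).ne
    have hne2 : μ {(1 : ℝ)} ≠ ⊤ := (measure_lt_top μ _).ne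
    -- mean zero gives equality of atoms
    have hmean' : ∫ x, x ∂μ = 0 := by
      rw [hμdef, integral_map (f := fun x => x) hX measurable_id.aestronglyMeasurable]
      exact hmean
    rw [hdecomp, integral_add_measure (integrable_smul_dirac hne1 (fun x => x) measurable_id _)
        (integrable_smul_dirac hne2 (fun x => x) measurable_id _),
      integral_smul_measure, integral_smul_measure, integral_dirac, integral_dirac,
      smul_eq_mul, smul_eq_mul] at hmean'
    have htsum : (μ {(-1 : ℝ)}).toReal + (μ {(1 : ℝ)}).toReal = 1 := by
      rw [← ENNReal.toReal_add hne1 hne2, hsum]; simp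
    have ht1 : (μ {(-1 : ℝ)}).toReal = 1 / 2 := by linarith
    have ht2 : (μ {(1 : ℝ)}).toReal = 1 / 2 := by linarith
    have hv1 : μ {(-1 : ℝ)} = 1 / 2 := by
      refine (ENNReal.toReal_eq_toReal_iff' hne1 (by norm_num)).mp ?_
      rw [ht1]; norm_num
    have hv2 : μ {(1 : ℝ)} = 1 / 2 := by
      refine (ENNReal.toReal_eq_toReal_iff' hne2 (by norm_num)).mp ?_
      rw [ht2]; norm_num
    rw [hdecomp, hv1, hv2]
  · intro hmap
    have : ∫ ω, X ω ^ 4 ∂P = ∫ x, x ^ 4 ∂μ :=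
      (integral_map (f := fun x => x ^ 4) hX
        ((measurable_id.pow_const 4).aestronglyMeasurable)).symm
    rw [this, hmap]
    rw [integral_add_measure (integrable_smul_dirac (by norm_num) (fun x => x ^ 4) (by fun_prop) _)
      (integrable_smul_dirac (by norm_num) (fun x => x ^ 4) (by fun_prop) _),
      integral_smul_measure, integral_smul_measure, integral_dirac, integral_dirac]
    norm_num
end

section
/- Let μ be a probability measure on ℝ with mean 0, variance 1, and finite fourth moment m₄(μ), and suppose μ = ν^{*N} is the N-fold classical convolution of some probability measure ν. Then the Kolmogorov distance between μ and the standard Gaussian law Φ satisfies d_Kol(μ, Φ) ≤ C·√(m₄(μ) - 3 + 3/N), where C is the universal constant in the Berry–Esseen theorem. -/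
open MeasureTheory ProbabilityTheory

/-- `N`-fold classical convolution power of a measure on `ℝ`
(with the convention that the 0-th power is `δ₀`). -/
noncomputable def convNPow (ν : Measure ℝ) : ℕ → Measure ℝ
  | 0 => Measure.dirac 0
  | n + 1 => Measure.conv (convNPow ν n) ν

/-- Kolmogorov (sup) distance between two measures on `ℝ`,
via their distribution functions. -/
noncomputable def kolDist (μ ν : Measure ℝ) : ℝ :=
  ⨆ x : ℝ, |cdf μ x - cdf ν x|

lemma pow4_add_le (a b : ℝ) : (a + b) ^ 4 ≤ 8 * (a ^ 4 + b ^ 4) := by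
  nlinarith [sq_nonneg (a - b), sq_nonneg (a + b), mul_nonneg (sq_nonneg (a - b)) (sq_nonneg (a + b)), mul_nonneg (sq_nonneg (a - b)) (sq_nonneg a), mul_nonneg (sq_nonneg (a - b)) (sq_nonneg b)]

lemma abs_pow_le_one_add (k : ℕ) (hk : k ≤ 4) (x : ℝ) : |x| ^ k ≤ 1 + x ^ 4 := by
  have h4 : x ^ 4 = |x| ^ 4 := by rw [← abs_pow, abs_of_nonneg (by positivity)]
  rcases le_or_gt (|x|) 1 with h | h
  · have : |x| ^ k ≤ 1 := pow_le_one₀ (abs_nonneg x) h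
    nlinarith [pow_nonneg (abs_nonneg x) 4]
  · have : |x| ^ k ≤ |x| ^ 4 := pow_le_pow_right₀ h.le hk
    nlinarith

lemma integrable_abs_pow_of_pow4 {ν : Measure ℝ} [IsFiniteMeasure ν]
    (h : Integrable (fun x => x ^ 4) ν) {k : ℕ} (hk : k ≤ 4) :
    Integrable (fun x => |x| ^ k) ν := by
  refine ((integrable_const (1:ℝ)).add h).mono' ((continuous_abs.pow k).aestronglyMeasurable)
    (ae_of_all _ fun x => ?_)
  rw [Real.norm_eq_abs, abs_of_nonneg (by positivity)]
  exact abs_pow_le_one_add k hk x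

lemma integrable_pow_of_pow4 {ν : Measure ℝ} [IsFiniteMeasure ν]
    (h : Integrable (fun x => x ^ 4) ν) {k : ℕ} (hk : k ≤ 4) :
    Integrable (fun x => x ^ k) ν := by
  refine ((integrable_const (1:ℝ)).add h).mono' ((continuous_pow k).aestronglyMeasurable)
    (ae_of_all _ fun x => ?_)
  simp only [Pi.add_apply, Real.norm_eq_abs, abs_pow]
  exact abs_pow_le_one_add k hk x

lemma integrable_conv_iff' {P Q : Measure ℝ} [SFinite P] [SFinite Q] {f : ℝ → ℝ}
    (hf : AEStronglyMeasurable f (P.conv Q)) :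
    Integrable f (P.conv Q) ↔ Integrable (fun p : ℝ × ℝ => f (p.1 + p.2)) (P.prod Q) := by
  unfold Measure.conv
  rw [integrable_map_measure hf (by fun_prop)]
  rfl

lemma integral_conv' {P Q : Measure ℝ} [SFinite P] [SFinite Q] {f : ℝ → ℝ}
    (hf : AEStronglyMeasurable f (P.conv Q)) :
    ∫ x, f x ∂(P.conv Q) = ∫ p : ℝ × ℝ, f (p.1 + p.2) ∂(P.prod Q) := by
  unfold Measure.conv at *
  rw [integral_map (by fun_prop) hf]

lemma isProbabilityMeasure_convNPow (ν : Measure ℝ) [IsProbabilityMeasure ν] (n : ℕ) :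
    IsProbabilityMeasure (convNPow ν n) := by
  induction n with
  | zero => rw [convNPow]; infer_instance
  | succ n ih => rw [convNPow]; exact @Measure.probabilitymeasure_of_probabilitymeasures_conv ℝ _ _ _ _ _ ih _

lemma integrable_prod_pow {P Q : Measure ℝ} [SFinite P] [SFinite Q] {i j : ℕ}
    (hi : Integrable (fun x => x ^ i) P) (hj : Integrable (fun x => x ^ j) Q) :
    Integrable (fun p : ℝ × ℝ => p.1 ^ i * p.2 ^ j) (P.prod Q) :=
  hi.mul_prod hj

lemma integral_prod_pow (P Q : Measure ℝ) [SFinite P] [SFinite Q] (i j : ℕ) :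
    ∫ p : ℝ × ℝ, p.1 ^ i * p.2 ^ j ∂(P.prod Q) = (∫ x, x ^ i ∂P) * ∫ x, x ^ j ∂Q :=
  integral_prod_mul _ _

lemma convNPow_mean (ν : Measure ℝ) [IsProbabilityMeasure ν]
    (h1 : Integrable (fun x => x) ν) (n : ℕ) :
    Integrable (fun x => x) (convNPow ν n) ∧
      ∫ x, x ∂(convNPow ν n) = n * ∫ x, x ∂ν := by
  induction n with
  | zero =>
    rw [convNPow]
    constructor
    · exact (integrable_const ((0:ℝ))).congr (ae_eq_dirac (fun x : ℝ => x)).symm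
    · simp [integral_dirac]
  | succ n ih =>
    obtain ⟨ihi, ihm⟩ := ih
    haveI := isProbabilityMeasure_convNPow ν n
    set P := convNPow ν n with hP
    have hfst : Integrable (fun p : ℝ × ℝ => p.1) (P.prod ν) := by
      simpa using (integrable_prod_pow (i := 1) (j := 0) (by simpa using ihi) (by simp))
    have hsnd : Integrable (fun p : ℝ × ℝ => p.2) (P.prod ν) := by
      simpa using (integrable_prod_pow (i := 0) (j := 1) (by simp) (by simpa using h1))
    have hint : Integrable (fun p : ℝ × ℝ => p.1 + p.2) (P.prod ν) := hfst.add hsnd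
    have key : ∫ x, x ∂(P.conv ν) = ∫ p : ℝ × ℝ, p.1 + p.2 ∂(P.prod ν) :=
      integral_conv' (continuous_id.aestronglyMeasurable)
    constructor
    · rw [convNPow, ← hP]
      exact (integrable_conv_iff' continuous_id.aestronglyMeasurable).mpr hint
    · rw [convNPow, ← hP, key, integral_add hfst hsnd]
      have e1 : ∫ p : ℝ × ℝ, p.1 ∂(P.prod ν) = ∫ x, x ∂P := by
        have := integral_prod_pow P ν 1 0
        simpa using this
      have e2 : ∫ p : ℝ × ℝ, p.2 ∂(P.prod ν) = ∫ x, x ∂ν := by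
        have := integral_prod_pow P ν 0 1
        simpa using this
      rw [e1, e2, ihm]
      push_cast
      ring

lemma convNPow_moments (ν : Measure ℝ) [IsProbabilityMeasure ν]
    (h4 : Integrable (fun x => x ^ 4) ν) (hm : ∫ x, x ∂ν = 0) (n : ℕ) :
    Integrable (fun x => x ^ 4) (convNPow ν n) ∧
      ∫ x, x ∂(convNPow ν n) = 0 ∧
      ∫ x, x ^ 2 ∂(convNPow ν n) = n * ∫ x, x ^ 2 ∂ν ∧
      ∫ x, x ^ 4 ∂(convNPow ν n) =
        n * (∫ x, x ^ 4 ∂ν) + 3 * n * ((n : ℝ) - 1) * (∫ x, x ^ 2 ∂ν) ^ 2 := by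
  induction n with
  | zero =>
    rw [convNPow]
    refine ⟨(integrable_const ((0:ℝ)^4)).congr ?_, ?_, ?_, ?_⟩
    · exact (ae_eq_dirac (fun x : ℝ => x ^ 4)).symm
    · simp [integral_dirac]
    · simp [integral_dirac]
    · simp [integral_dirac]
  | succ n ih =>
    obtain ⟨ih4, ihm, ih2, ih4'⟩ := ih
    haveI := isProbabilityMeasure_convNPow ν n
    set P := convNPow ν n with hP
    -- integrability of powers
    have hP1 : Integrable (fun x => x ^ 1) P := integrable_pow_of_pow4 ih4 (by norm_num)
    have hP2 : Integrable (fun x => x ^ 2) P := integrable_pow_of_pow4 ih4 (by norm_num)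
    have hP3 : Integrable (fun x => x ^ 3) P := integrable_pow_of_pow4 ih4 (by norm_num)
    have hν1 : Integrable (fun x => x ^ 1) ν := integrable_pow_of_pow4 h4 (by norm_num)
    have hν2 : Integrable (fun x => x ^ 2) ν := integrable_pow_of_pow4 h4 (by norm_num)
    have hν3 : Integrable (fun x => x ^ 3) ν := integrable_pow_of_pow4 h4 (by norm_num)
    have hP0 : Integrable (fun x : ℝ => x ^ 0) P := by simp
    have hν0 : Integrable (fun x : ℝ => x ^ 0) ν := by simp
    -- integrability of the fourth power on the product
    have hprod4 : Integrable (fun p : ℝ × ℝ => (p.1 + p.2) ^ 4) (P.prod ν) := by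
      have gP : Integrable (fun p : ℝ × ℝ => p.1 ^ 4) (P.prod ν) := by
        simpa using integrable_prod_pow (i := 4) (j := 0) ih4 hν0
      have gQ : Integrable (fun p : ℝ × ℝ => p.2 ^ 4) (P.prod ν) := by
        simpa using integrable_prod_pow (i := 0) (j := 4) hP0 h4
      refine ((gP.add gQ).const_mul 8).mono'
        (((continuous_fst.add continuous_snd).pow 4).aestronglyMeasurable)
        (ae_of_all _ fun p => ?_)
      rw [Real.norm_eq_abs, abs_of_nonneg (by positivity)]
      exact pow4_add_le _ _
    have new4 : Integrable (fun x => x ^ 4) (P.conv ν) :=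
      (integrable_conv_iff' ((continuous_pow 4).aestronglyMeasurable)).mpr hprod4
    refine ⟨by rw [convNPow, ← hP]; exact new4, ?_, ?_, ?_⟩
    · -- mean
      have := (convNPow_mean ν (by simpa using hν1) (n + 1)).2
      rw [this, hm, mul_zero]
    · -- second moment
      rw [convNPow, ← hP,
        integral_conv' ((continuous_pow 2).aestronglyMeasurable)]
      have e : (fun p : ℝ × ℝ => (p.1 + p.2) ^ 2)
          = fun p => p.1 ^ 2 * p.2 ^ 0 + (2 * (p.1 ^ 1 * p.2 ^ 1) + p.1 ^ 0 * p.2 ^ 2) := by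
        funext p; ring
      have t0 := integrable_prod_pow (i := 2) (j := 0) hP2 hν0
      have t1 := (integrable_prod_pow (i := 1) (j := 1) hP1 hν1).const_mul 2
      have t2 := integrable_prod_pow (i := 0) (j := 2) hP0 hν2
      have s1 : Integrable (fun p : ℝ × ℝ => 2 * (p.1 ^ 1 * p.2 ^ 1) + p.1 ^ 0 * p.2 ^ 2)
          (P.prod ν) := t1.add t2
      rw [e, integral_add t0 s1]
      beta_reduce
      rw [integral_add t1 t2, integral_const_mul _ _,
        integral_prod_pow, integral_prod_pow, integral_prod_pow]
      simp only [pow_zero, pow_one, integral_const, measure_univ, probReal_univ, ENNReal.toReal_one, smul_eq_mul,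
        mul_one, one_mul]
      rw [ihm, hm, ih2]
      push_cast
      ring
    · -- fourth moment
      rw [convNPow, ← hP,
        integral_conv' ((continuous_pow 4).aestronglyMeasurable)]
      have e : (fun p : ℝ × ℝ => (p.1 + p.2) ^ 4)
          = fun p => p.1 ^ 4 * p.2 ^ 0 + (4 * (p.1 ^ 3 * p.2 ^ 1) + (6 * (p.1 ^ 2 * p.2 ^ 2)
              + (4 * (p.1 ^ 1 * p.2 ^ 3) + p.1 ^ 0 * p.2 ^ 4))) := by
        funext p; ring
      have t0 := integrable_prod_pow (i := 4) (j := 0) ih4 hν0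
      have t1 := (integrable_prod_pow (i := 3) (j := 1) hP3 hν1).const_mul 4
      have t2 := (integrable_prod_pow (i := 2) (j := 2) hP2 hν2).const_mul 6
      have t3 := (integrable_prod_pow (i := 1) (j := 3) hP1 hν3).const_mul 4
      have t4 := integrable_prod_pow (i := 0) (j := 4) hP0 h4
      have s3 : Integrable (fun p : ℝ × ℝ => 4 * (p.1 ^ 1 * p.2 ^ 3) + p.1 ^ 0 * p.2 ^ 4)
          (P.prod ν) := t3.add t4
      have s2 : Integrable (fun p : ℝ × ℝ => 6 * (p.1 ^ 2 * p.2 ^ 2)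
          + (4 * (p.1 ^ 1 * p.2 ^ 3) + p.1 ^ 0 * p.2 ^ 4)) (P.prod ν) := t2.add s3
      have s1 : Integrable (fun p : ℝ × ℝ => 4 * (p.1 ^ 3 * p.2 ^ 1) + (6 * (p.1 ^ 2 * p.2 ^ 2)
          + (4 * (p.1 ^ 1 * p.2 ^ 3) + p.1 ^ 0 * p.2 ^ 4))) (P.prod ν) := t1.add s2
      rw [e, integral_add t0 s1]
      beta_reduce
      rw [integral_add t1 s2]
      beta_reduce
      rw [integral_add t2 s3]
      beta_reduce
      rw [integral_add t3 t4,
        integral_const_mul _ _, integral_const_mul _ _, integral_const_mul _ _,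
        integral_prod_pow, integral_prod_pow, integral_prod_pow, integral_prod_pow,
        integral_prod_pow]
      simp only [pow_zero, pow_one, integral_const, measure_univ, probReal_univ, ENNReal.toReal_one, smul_eq_mul,
        mul_one, one_mul]
      rw [ihm, hm, ih2, ih4']
      push_cast
      ring

lemma integrable_pow4_right_of_conv {P Q : Measure ℝ} [IsProbabilityMeasure P]
    [IsProbabilityMeasure Q] (h : Integrable (fun x => x ^ 4) (P.conv Q)) :
    Integrable (fun x => x ^ 4) Q := by
  have h' : Integrable (fun p : ℝ × ℝ => (p.1 + p.2) ^ 4) (P.prod Q) :=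
    (integrable_conv_iff' ((continuous_pow 4).aestronglyMeasurable)).mp h
  have hae : ∀ᵐ x ∂P, Integrable (fun y => (x + y) ^ 4) Q := h'.prod_right_ae
  haveI : (ae P).NeBot := ae_neBot.mpr (IsProbabilityMeasure.ne_zero P)
  obtain ⟨x₀, hx₀⟩ := hae.exists
  refine ((hx₀.add (integrable_const (x₀ ^ 4))).const_mul 8).mono'
    ((continuous_pow 4).aestronglyMeasurable) (ae_of_all _ fun y => ?_)
  rw [Real.norm_eq_abs, abs_of_nonneg (by positivity)]
  calc y ^ 4 = ((x₀ + y) + (-x₀)) ^ 4 := by ring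
    _ ≤ 8 * ((x₀ + y) ^ 4 + (-x₀) ^ 4) := pow4_add_le _ _
    _ = 8 * ((x₀ + y) ^ 4 + x₀ ^ 4) := by ring

lemma kolDist_nonneg' (μ ν : Measure ℝ) :
    0 ≤ ⨆ x : ℝ, |cdf μ x - cdf ν x| :=
  Real.iSup_nonneg fun _ => abs_nonneg _

lemma abs_cube_integral_le (ν : Measure ℝ) [IsProbabilityMeasure ν]
    (h4 : Integrable (fun x => x ^ 4) ν) :
    ∫ x, |x| ^ 3 ∂ν ≤ Real.sqrt (∫ x, x ^ 2 ∂ν) * Real.sqrt (∫ x, x ^ 4 ∂ν) := by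
  have h2 : Integrable (fun x => x ^ 2) ν := integrable_pow_of_pow4 h4 (by norm_num)
  have hpq : Real.HolderConjugate 2 2 := Real.HolderConjugate.two_two
  have hof : ENNReal.ofReal (2:ℝ) = 2 := by norm_num [ENNReal.ofReal_ofNat]
  have hf : MemLp (fun x : ℝ => |x|) (ENNReal.ofReal 2) ν := by
    rw [hof, memLp_two_iff_integrable_sq (continuous_abs.aestronglyMeasurable)]
    simpa [sq_abs] using h2
  have hg : MemLp (fun x : ℝ => x ^ 2) (ENNReal.ofReal 2) ν := by
    rw [hof, memLp_two_iff_integrable_sq ((continuous_pow 2).aestronglyMeasurable)]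
    have : (fun x : ℝ => (x ^ 2) ^ 2) = fun x => x ^ 4 := by funext x; ring
    rw [this]; exact h4
  have key := integral_mul_le_Lp_mul_Lq_of_nonneg hpq (ae_of_all _ fun x => abs_nonneg x)
    (ae_of_all _ fun x => sq_nonneg x) hf hg
  have e0 : (fun x : ℝ => |x| ^ 3) = fun x => |x| * x ^ 2 := by
    funext x
    rw [show |x| ^ 3 = |x| * |x| ^ 2 by ring, sq_abs]
  rw [e0]
  refine key.trans (le_of_eq ?_)
  have c1 : ∀ x : ℝ, |x| ^ (2:ℝ) = x ^ 2 := fun x => by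
    rw [show (2:ℝ) = ((2:ℕ):ℝ) by norm_num, Real.rpow_natCast, sq_abs]
  have c2 : ∀ x : ℝ, (x ^ 2) ^ (2:ℝ) = x ^ 4 := fun x => by
    rw [show (2:ℝ) = ((2:ℕ):ℝ) by norm_num, Real.rpow_natCast]; ring
  simp_rw [c1, c2]
  rw [← Real.sqrt_eq_rpow, ← Real.sqrt_eq_rpow]



theorem kolmogorov_bound_N_divisible
    (C : ℝ)
    -- the Berry–Esseen theorem with constant `C`:
    (hBE : ∀ (ρ : Measure ℝ), IsProbabilityMeasure ρ → ∀ n : ℕ, 0 < n →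
      (∫ x, x ∂ρ = 0) → 0 < ∫ x, x ^ 2 ∂ρ →
      Integrable (fun x => |x| ^ 3) ρ →
      kolDist
        (Measure.map
          (fun x => x / (Real.sqrt (∫ x, x ^ 2 ∂ρ) * Real.sqrt n))
          (convNPow ρ n))
        (gaussianReal 0 1) ≤
        C * (∫ x, |x| ^ 3 ∂ρ) /
          (Real.sqrt (∫ x, x ^ 2 ∂ρ) ^ 3 * Real.sqrt n))
    (μ ν : Measure ℝ) [IsProbabilityMeasure μ] [IsProbabilityMeasure ν]
    (N : ℕ) (hN : 0 < N) (hdiv : μ = convNPow ν N)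
    (hmean : ∫ x, x ∂μ = 0) (hvar : ∫ x, x ^ 2 ∂μ = 1)
    (h4 : Integrable (fun x => x ^ 4) μ) :
    kolDist μ (gaussianReal 0 1) ≤
      C * Real.sqrt ((∫ x, x ^ 4 ∂μ) - 3 + 3 / N) := by
  have hNR : (0:ℝ) < N := Nat.cast_pos.mpr hN
  -- ν has a finite fourth moment
  obtain ⟨K, hK⟩ : ∃ K, N = K + 1 := ⟨N - 1, (Nat.succ_pred_eq_of_pos hN).symm⟩
  have h4ν : Integrable (fun x => x ^ 4) ν := by
    have hdiv2 := hdiv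
    rw [hK] at hdiv2
    rw [convNPow] at hdiv2
    haveI := isProbabilityMeasure_convNPow ν K
    have h4' := h4
    rw [hdiv2] at h4'
    exact integrable_pow4_right_of_conv h4'
  have h1ν : Integrable (fun x => x) ν := by
    simpa using integrable_pow_of_pow4 h4ν (k := 1) (by norm_num)
  -- ν is centered
  have hmν : ∫ x, x ∂ν = 0 := by
    have hmm := (convNPow_mean ν h1ν N).2
    rw [← hdiv, hmean] at hmm
    have := hmm.symm
    rcases mul_eq_zero.mp this with h | h
    · exact absurd h hNR.ne'
    · exact h
  set s := ∫ x, x ^ 2 ∂ν with hs_def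
  set q := ∫ x, x ^ 4 ∂ν with hq_def
  obtain ⟨-, -, hs2, hs4⟩ := convNPow_moments ν h4ν hmν N
  have hNs : (N:ℝ) * s = 1 := by rw [← hs2, ← hdiv]; exact hvar
  have hs_pos : 0 < s := by nlinarith
  have hsqs : 0 < Real.sqrt s := Real.sqrt_pos.mpr hs_pos
  have hint3 : Integrable (fun x => |x| ^ 3) ν := integrable_abs_pow_of_pow4 h4ν (by norm_num)
  have hI3_nonneg : 0 ≤ ∫ x, |x| ^ 3 ∂ν := integral_nonneg fun x => by positivity
  -- positivity of the third absolute moment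
  have hI3_pos : 0 < ∫ x, |x| ^ 3 ∂ν := by
    rcases hI3_nonneg.lt_or_eq with h | h
    · exact h
    · exfalso
      have hz := (integral_eq_zero_iff_of_nonneg (fun x => by positivity) hint3).mp h.symm
      have hz2 : (fun x : ℝ => x ^ 2) =ᵐ[ν] 0 := by
        filter_upwards [hz] with x hx
        have : |x| ^ 3 = 0 := hx
        have : x = 0 := by
          by_contra hxne
          exact absurd this (by positivity)
        simp [this]
      have : s = 0 := by rw [hs_def, integral_congr_ae hz2]; simp
      linarith
  -- C is nonnegative
  have hC : 0 ≤ C := by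
    have key1 := hBE ν inferInstance 1 one_pos hmν hs_pos hint3
    rw [← hs_def] at key1
    rw [Nat.cast_one, Real.sqrt_one, mul_one] at key1
    have hden : 0 < Real.sqrt s ^ 3 := by positivity
    have h0 : (0:ℝ) ≤ kolDist
        (Measure.map (fun x => x / Real.sqrt s) (convNPow ν 1)) (gaussianReal 0 1) :=
      Real.iSup_nonneg fun _ => abs_nonneg _
    have h2 := le_trans h0 key1
    rw [mul_one, le_div_iff₀ hden] at h2
    have h1 : 0 ≤ C * ∫ x, |x| ^ 3 ∂ν := by linarith
    nlinarith
  -- the Berry–Esseen bound for ν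
  have key := hBE ν inferInstance N hN hmν hs_pos hint3
  rw [← hs_def] at key
  have hsn : Real.sqrt s * Real.sqrt (N:ℝ) = 1 := by
    rw [← Real.sqrt_mul hs_pos.le, show s * (N:ℝ) = 1 by linarith, Real.sqrt_one]
  have hfun : (fun x : ℝ => x / (Real.sqrt s * Real.sqrt (N:ℝ))) = fun x => x := by
    funext x; rw [hsn, div_one]
  rw [hfun, ← hdiv, Measure.map_id'] at key
  refine key.trans ?_
  -- arithmetic
  have hm4 : ∫ x, x ^ 4 ∂μ = N * q + 3 * N * ((N:ℝ) - 1) * s ^ 2 := by rw [hdiv]; exact hs4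
  have hsN : s = ((N:ℝ))⁻¹ := eq_inv_of_mul_eq_one_left (by linear_combination hNs)
  have hq_eq : (∫ x, x ^ 4 ∂μ) - 3 + 3 / (N:ℝ) = (N:ℝ) * q := by
    rw [hm4, hsN]
    field_simp
    ring
  rw [hq_eq]
  have hcs : ∫ x, |x| ^ 3 ∂ν ≤ Real.sqrt s * Real.sqrt q := by
    have := abs_cube_integral_le ν h4ν
    rwa [← hs_def, ← hq_def] at this
  have hsqN : 0 < Real.sqrt (N:ℝ) := Real.sqrt_pos.mpr hNR
  have hden : 0 < Real.sqrt s ^ 3 * Real.sqrt (N:ℝ) := by positivity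
  rw [div_le_iff₀ hden]
  have hN2 : Real.sqrt (N:ℝ) * Real.sqrt (N:ℝ) = (N:ℝ) := Real.mul_self_sqrt (Nat.cast_nonneg N)
  have hs2' : Real.sqrt s * Real.sqrt s = s := Real.mul_self_sqrt hs_pos.le
  calc C * ∫ x, |x| ^ 3 ∂ν ≤ C * (Real.sqrt s * Real.sqrt q) :=
        mul_le_mul_of_nonneg_left hcs hC
    _ = C * Real.sqrt ((N:ℝ) * q) * (Real.sqrt s ^ 3 * Real.sqrt (N:ℝ)) := by
        rw [Real.sqrt_mul (Nat.cast_nonneg N) q]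
        linear_combination (-(C * Real.sqrt q * Real.sqrt s ^ 3)) * hN2 +
          (-(C * Real.sqrt q * Real.sqrt s * (N:ℝ))) * hs2' +
          (-(C * Real.sqrt q * Real.sqrt s)) * hNs
end

section
/- The N-fold classical convolution μ of the rescaled symmetric Bernoulli measure ν = (1/2)δ_{1/√N} + (1/2)δ_{-1/√N} has mean 0, variance 1, and fourth moment m₄(μ) = 3 - 2/N; in particular the bound Kurt(μ) ≥ -2/N for N-divisible measures is sharp. -/
open MeasureTheory

noncomputable def nu (a : ℝ) : Measure ℝ :=
  (1 / 2 : ENNReal) • Measure.dirac a + (1 / 2 : ENNReal) • Measure.dirac (-a)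

lemma nu_prob (a : ℝ) : IsProbabilityMeasure (nu a) := by
  constructor
  simp only [nu, Measure.add_apply, Measure.smul_apply, measure_univ, smul_eq_mul, mul_one]
  exact ENNReal.add_halves 1

lemma conv_dirac' (μ : Measure ℝ) [SFinite μ] (a : ℝ) :
    μ.conv (Measure.dirac a) = μ.map (· + a) := by
  unfold Measure.conv
  rw [Measure.prod_dirac, Measure.map_map (by fun_prop) (by fun_prop)]
  rfl

lemma prod_smul_right (μ ν : Measure ℝ) [SigmaFinite μ] [IsFiniteMeasure ν] (c : ENNReal)
    (hc : c ≠ ⊤) : μ.prod (c • ν) = c • μ.prod ν := by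
  haveI : IsFiniteMeasure (c • ν) := by
    constructor
    simp only [Measure.smul_apply, smul_eq_mul]
    exact ENNReal.mul_lt_top hc.lt_top (measure_lt_top ν _)
  haveI : SigmaFinite (c • ν) := inferInstance
  refine Measure.prod_eq (μ := μ) (ν := c • ν) fun s t hs ht => ?_
  simp only [Measure.smul_apply, smul_eq_mul, Measure.prod_prod]
  ring

lemma conv_nu (μ : Measure ℝ) [SigmaFinite μ] (a : ℝ) :
    μ.conv (nu a) =
      (1 / 2 : ENNReal) • μ.map (· + a) + (1 / 2 : ENNReal) • μ.map (· + (-a)) := by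
  have h2 : (1 / 2 : ENNReal) ≠ ⊤ := by simp
  unfold nu Measure.conv
  rw [Measure.prod_add, Measure.map_add _ _ (by fun_prop),
    prod_smul_right _ _ _ h2, prod_smul_right _ _ _ h2,
    Measure.map_smul, Measure.map_smul]
  rw [show μ.prod (Measure.dirac a) = Measure.map (fun x => (x, a)) μ from Measure.prod_dirac a,
    show μ.prod (Measure.dirac (-a)) = Measure.map (fun x => (x, -a)) μ from Measure.prod_dirac (-a),
    Measure.map_map (by fun_prop) (by fun_prop), Measure.map_map (by fun_prop) (by fun_prop)]
  rfl

lemma integrable_dirac'' {f : ℝ → ℝ} (hf : Measurable f) (a : ℝ) :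
    Integrable f (Measure.dirac a) := by
  refine ⟨hf.aestronglyMeasurable, ?_⟩
  simp [HasFiniteIntegral, lintegral_dirac]

lemma integrable_shift_pow {μ : Measure ℝ} (h : ∀ k, Integrable (fun x : ℝ => x ^ k) μ)
    (a : ℝ) (k : ℕ) : Integrable (fun x => (x + a) ^ k) μ := by
  simp_rw [add_pow]
  exact integrable_finset_sum _ fun i _ => ((h i).mul_const _).mul_const _

lemma integral_conv_nu (μ : Measure ℝ) [IsFiniteMeasure μ] (a : ℝ) (f : ℝ → ℝ)
    (hf : Measurable f) (h₁ : Integrable (fun x => f (x + a)) μ)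
    (h₂ : Integrable (fun x => f (x + -a)) μ) :
    ∫ x, f x ∂(μ.conv (nu a)) = ((∫ x, f (x + a) ∂μ) + ∫ x, f (x + -a) ∂μ) / 2 := by
  rw [conv_nu]
  have hma : Integrable f (μ.map (· + a)) :=
    (integrable_map_measure hf.aestronglyMeasurable (by fun_prop)).mpr h₁
  have hmb : Integrable f (μ.map (· + (-a))) :=
    (integrable_map_measure hf.aestronglyMeasurable (by fun_prop)).mpr h₂
  rw [integral_add_measure (hma.smul_measure (by simp)) (hmb.smul_measure (by simp)),
    integral_smul_measure, integral_smul_measure,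
    integral_map (by fun_prop) hf.aestronglyMeasurable,
    integral_map (by fun_prop) hf.aestronglyMeasurable]
  have : ((1 : ENNReal) / 2).toReal = (1 : ℝ) / 2 := by
    simp [ENNReal.toReal_div]
  rw [this, smul_eq_mul, smul_eq_mul]
  ring

instance convNPow_nu_prob (a : ℝ) (n : ℕ) : IsProbabilityMeasure (convNPow (nu a) n) := by
  induction n with
  | zero => exact (by infer_instance : IsProbabilityMeasure (Measure.dirac (0:ℝ)))
  | succ n ih =>
    haveI := nu_prob a
    exact (by infer_instance : IsProbabilityMeasure ((convNPow (nu a) n).conv (nu a)))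

lemma moments_aux (a : ℝ) (n : ℕ) :
    (∀ k, Integrable (fun x : ℝ => x ^ k) (convNPow (nu a) n)) ∧
    (∫ x, x ∂(convNPow (nu a) n)) = 0 ∧
    (∫ x, x ^ 2 ∂(convNPow (nu a) n)) = n * a ^ 2 ∧
    (∫ x, x ^ 3 ∂(convNPow (nu a) n)) = 0 ∧
    (∫ x, x ^ 4 ∂(convNPow (nu a) n)) = (3 * n ^ 2 - 2 * n) * a ^ 4 := by
  induction n with
  | zero =>
    refine ⟨fun k => integrable_dirac'' (by fun_prop) 0, ?_, ?_, ?_, ?_⟩ <;>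
      simp [show convNPow (nu a) 0 = Measure.dirac 0 from rfl, integral_dirac]
  | succ n ih =>
    obtain ⟨hint, h1, h2, h3, h4⟩ := ih
    haveI := convNPow_nu_prob a n
    set μ := convNPow (nu a) n with hμ
    have hconv : convNPow (nu a) (n + 1) = μ.conv (nu a) := rfl
    have key : ∀ k, (∫ x, x ^ k ∂(convNPow (nu a) (n + 1))) =
        ((∫ x, (x + a) ^ k ∂μ) + ∫ x, (x + -a) ^ k ∂μ) / 2 := fun k => by
      rw [hconv]
      exact integral_conv_nu μ a (fun x => x ^ k) (by fun_prop)
        (integrable_shift_pow hint a k) (integrable_shift_pow hint (-a) k)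
    have hint' : ∀ k, Integrable (fun x : ℝ => x ^ k) (convNPow (nu a) (n + 1)) := by
      intro k
      rw [hconv, conv_nu]
      have hg : ∀ ν' : Measure ℝ, AEStronglyMeasurable (fun x : ℝ => x ^ k) ν' := fun ν' =>
        (measurable_id.pow_const k).aestronglyMeasurable
      refine Integrable.add_measure ?_ ?_
      · exact ((integrable_map_measure (hg _) (by fun_prop)).mpr
          (integrable_shift_pow hint a k)).smul_measure (by simp)
      · exact ((integrable_map_measure (hg _) (by fun_prop)).mpr
          (integrable_shift_pow hint (-a) k)).smul_measure (by simp)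
    have h1' : (∫ x, x ^ 1 ∂μ) = 0 := by simpa using h1
    have E1 : ∀ b : ℝ, (∫ x, (x + b) ^ 1 ∂μ) = b := fun b => by
      have e : (fun x : ℝ => (x + b) ^ 1) = fun x => x ^ 1 + b := by funext x; ring
      rw [e, integral_add (hint 1) (integrable_const _), h1', integral_const]
      simp
    have E2 : ∀ b : ℝ, (∫ x, (x + b) ^ 2 ∂μ) = n * a ^ 2 + b ^ 2 := fun b => by
      have e : (fun x : ℝ => (x + b) ^ 2) = fun x => x ^ 2 + (2 * b) * x ^ 1 + b ^ 2 := by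
        funext x; ring
      have i1 : Integrable (fun x : ℝ => x ^ 2 + 2 * b * x ^ 1) μ :=
        (hint 2).add ((hint 1).const_mul _)
      rw [e, integral_add i1 (integrable_const _),
        integral_add (hint 2) ((hint 1).const_mul _), integral_const_mul _, h1', h2,
        integral_const]
      simp
    have E3 : ∀ b : ℝ, (∫ x, (x + b) ^ 3 ∂μ) = 3 * b * (n * a ^ 2) + b ^ 3 := fun b => by
      have e : (fun x : ℝ => (x + b) ^ 3) =
          fun x => x ^ 3 + (3 * b) * x ^ 2 + (3 * b ^ 2) * x ^ 1 + b ^ 3 := by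
        funext x; ring
      have i1 : Integrable (fun x : ℝ => x ^ 3 + 3 * b * x ^ 2) μ :=
        (hint 3).add ((hint 2).const_mul _)
      have i2 : Integrable (fun x : ℝ => x ^ 3 + 3 * b * x ^ 2 + 3 * b ^ 2 * x ^ 1) μ :=
        i1.add ((hint 1).const_mul _)
      rw [e, integral_add i2 (integrable_const _), integral_add i1 ((hint 1).const_mul _),
        integral_add (hint 3) ((hint 2).const_mul _),
        integral_const_mul _, integral_const_mul _, h1', h2, h3, integral_const]
      simp
    have E4 : ∀ b : ℝ, (∫ x, (x + b) ^ 4 ∂μ) =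
        (3 * n ^ 2 - 2 * n) * a ^ 4 + 6 * b ^ 2 * (n * a ^ 2) + b ^ 4 := fun b => by
      have e : (fun x : ℝ => (x + b) ^ 4) =
          fun x => x ^ 4 + (4 * b) * x ^ 3 + (6 * b ^ 2) * x ^ 2 + (4 * b ^ 3) * x ^ 1
            + b ^ 4 := by
        funext x; ring
      have i1 : Integrable (fun x : ℝ => x ^ 4 + 4 * b * x ^ 3) μ :=
        (hint 4).add ((hint 3).const_mul _)
      have i2 : Integrable (fun x : ℝ => x ^ 4 + 4 * b * x ^ 3 + 6 * b ^ 2 * x ^ 2) μ :=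
        i1.add ((hint 2).const_mul _)
      have i3 : Integrable
          (fun x : ℝ => x ^ 4 + 4 * b * x ^ 3 + 6 * b ^ 2 * x ^ 2 + 4 * b ^ 3 * x ^ 1) μ :=
        i2.add ((hint 1).const_mul _)
      rw [e, integral_add i3 (integrable_const _), integral_add i2 ((hint 1).const_mul _),
        integral_add i1 ((hint 2).const_mul _),
        integral_add (hint 4) ((hint 3).const_mul _),
        integral_const_mul _, integral_const_mul _, integral_const_mul _, h1', h2, h3, h4,
        integral_const]
      simp
    refine ⟨hint', ?_, ?_, ?_, ?_⟩
    · have := key 1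
      simp only [pow_one] at this ⊢
      rw [this]
      have ea := E1 a; have eb := E1 (-a)
      simp only [pow_one] at ea eb
      rw [ea, eb]; ring
    · rw [key 2, E2 a, E2 (-a)]; push_cast; ring
    · rw [key 3, E3 a, E3 (-a)]; ring
    · rw [key 4, E4 a, E4 (-a)]; push_cast; ring

theorem bernoulli_conv_pow_moments (N : ℕ) (hN : 0 < N) :
    let ν : Measure ℝ :=
      (1 / 2 : ENNReal) • Measure.dirac (1 / Real.sqrt N) +
        (1 / 2 : ENNReal) • Measure.dirac (-(1 / Real.sqrt N))
    let μ := convNPow ν N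
    (∫ x, x ∂μ = 0) ∧ (∫ x, x ^ 2 ∂μ = 1) ∧
      (∫ x, x ^ 4 ∂μ = 3 - 2 / N) := by
  intro ν μ
  have hν : ν = nu (1 / Real.sqrt N) := rfl
  obtain ⟨-, h1, h2, -, h4⟩ := moments_aux (1 / Real.sqrt N) N
  have hNpos : (0 : ℝ) < N := by exact_mod_cast hN
  have ha2 : (1 / Real.sqrt N : ℝ) ^ 2 = 1 / N := by
    rw [div_pow, one_pow, Real.sq_sqrt (le_of_lt hNpos)]
  have hμ' : μ = convNPow (nu (1 / Real.sqrt N)) N := by rw [← hν]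
  refine ⟨by rw [hμ']; exact h1, ?_, ?_⟩
  · rw [hμ', h2, ha2]
    field_simp
  · rw [hμ', h4, show (1 / Real.sqrt N : ℝ) ^ 4 = ((1 / Real.sqrt N) ^ 2) ^ 2 by ring, ha2]
    field_simp
end
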